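/- Let K = {(t,x) ∈ ℝ × ℝ^{n-1} : t ∈ [−1,1], |x| ≤ r₁(t)} be a symmetric convex body of revolution with r₁ concave, r₁(0) = 1, and let K° = {(s,y) : s ∈ [−1,1], |y| ≤ r₂(s)} be its polar body with r₂ concave, r₂(0) = 1. Then the second summand in the decomposition of φ(K) is bounded by φ(B_2^{n-1}): [∫_{−1}^{1} r₁(t)^{n+1} dt · ∫_{−1}^{1} r₂(s)^{n+1} ds] / [∫_{−1}^{1} r₁(t)^{n-1} dt · ∫_{−1}^{1} r₂(s)^{n-1} ds] · φ(B_2^{n-1}) ≤ (n−1)/(n+1)². -/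

import Mathlib

open MeasureTheory Real Set
open scoped RealInnerProductSpace

/-- The polar body `K° = {x : ⟨x,y⟩ ≤ 1 for all y ∈ K}`. -/
noncomputable def polarBody {n : ℕ} (K : Set (EuclideanSpace ℝ (Fin n))) :
    Set (EuclideanSpace ℝ (Fin n)) :=
  {x | ∀ y ∈ K, ⟪x, y⟫ ≤ 1}

/-- The Euclidean norm of the vector of all coordinates except the first one,
i.e. `|x|` for `x̄ = (t, x) ∈ ℝ × ℝ^{n-1}`. -/
noncomputable def tailNorm {n : ℕ} [NeZero n] (x : EuclideanSpace ℝ (Fin n)) : ℝ :=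
  Real.sqrt (∑ i ∈ Finset.univ.erase (0 : Fin n), x i ^ 2)

/-- The body of revolution `{(t,x) ∈ ℝ × ℝ^{n-1} : t ∈ [−1,1], |x| ≤ r t}`. -/
def revBody (n : ℕ) [NeZero n] (r : ℝ → ℝ) : Set (EuclideanSpace ℝ (Fin n)) :=
  {x | x 0 ∈ Icc (-1 : ℝ) 1 ∧ tailNorm x ≤ r (x 0)}

section Aux

variable {n : ℕ} [NeZero n]

lemma tailNorm_nonneg (x : EuclideanSpace ℝ (Fin n)) : 0 ≤ tailNorm x :=
  Real.sqrt_nonneg _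

lemma tailNorm_neg (x : EuclideanSpace ℝ (Fin n)) : tailNorm (-x) = tailNorm x := by
  unfold tailNorm
  congr 1
  refine Finset.sum_congr rfl fun i _ => ?_
  simp

lemma tailNorm_single_zero (t : ℝ) :
    tailNorm (EuclideanSpace.single (0 : Fin n) t) = 0 := by
  unfold tailNorm
  rw [Finset.sum_eq_zero, Real.sqrt_zero]
  intro i hi
  have hi0 : i ≠ 0 := (Finset.mem_erase.1 hi).1
  simp [EuclideanSpace.single_apply, hi0]

lemma tailNorm_single {j : Fin n} (hj : j ≠ 0) (c : ℝ) :
    tailNorm (EuclideanSpace.single j c) = |c| := by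
  unfold tailNorm
  rw [Finset.sum_eq_single_of_mem j (Finset.mem_erase.2 ⟨hj, Finset.mem_univ j⟩)]
  · simp [Real.sqrt_sq_eq_abs]
  · intro i _ hij
    simp [EuclideanSpace.single_apply, hij]

lemma tailNorm_add_single {j : Fin n} (hj : j ≠ 0) (t c : ℝ) :
    tailNorm (EuclideanSpace.single (0 : Fin n) t + EuclideanSpace.single j c) = |c| := by
  have h : ∀ i ∈ Finset.univ.erase (0 : Fin n),
      ((EuclideanSpace.single (0 : Fin n) t + EuclideanSpace.single j c) i) ^ 2
        = (EuclideanSpace.single j c i) ^ 2 := by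
    intro i hi
    have hi0 : i ≠ 0 := (Finset.mem_erase.1 hi).1
    simp [EuclideanSpace.single_apply, hi0]
  unfold tailNorm
  rw [Finset.sum_congr rfl h]
  exact tailNorm_single hj c

lemma integrableOn_pow_of_bounds {r : ℝ → ℝ} (hc : ContinuousOn r (Ioo (-1 : ℝ) 1))
    (h0 : ∀ t ∈ Ioo (-1 : ℝ) 1, 0 ≤ r t) (h1 : ∀ t ∈ Ioo (-1 : ℝ) 1, r t ≤ 1) (k : ℕ) :
    IntegrableOn (fun t => r t ^ k) (Ioo (-1 : ℝ) 1) := by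
  have hm : AEStronglyMeasurable (fun t => r t ^ k) (volume.restrict (Ioo (-1 : ℝ) 1)) :=
    (hc.pow k).aestronglyMeasurable measurableSet_Ioo
  refine Integrable.mono' (g := fun _ => (1 : ℝ))
    (integrableOn_const measure_Ioo_lt_top.ne) hm ?_
  filter_upwards [ae_restrict_mem measurableSet_Ioo] with t ht
  rw [Real.norm_eq_abs, abs_pow]
  apply pow_le_one₀ (abs_nonneg _)
  rw [abs_le]
  exact ⟨by linarith [h0 t ht], h1 t ht⟩

end Aux

/-- Let `K = {(t,x) : t ∈ [−1,1], |x| ≤ r₁(t)}` be a symmetric convex body of revolution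
with `r₁` concave, `r₁(0) = 1`, and let `K° = {(s,y) : s ∈ [−1,1], |y| ≤ r₂(s)}` be its
polar body with `r₂` concave, `r₂(0) = 1`.  Then
`[∫ r₁^{n+1} · ∫ r₂^{n+1}] / [∫ r₁^{n-1} · ∫ r₂^{n-1}] · φ(B_2^{n-1}) ≤ (n−1)/(n+1)²`,
where `φ(B_2^{n-1}) = (n−1)/(n+1)²`. -/
theorem revolution_second_summand_le (n : ℕ) [NeZero n] (hn : 2 ≤ n) (r₁ r₂ : ℝ → ℝ)
    (hr₁ : ConcaveOn ℝ (Icc (-1 : ℝ) 1) r₁) (hr₁0 : r₁ 0 = 1)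
    (hr₂ : ConcaveOn ℝ (Icc (-1 : ℝ) 1) r₂) (hr₂0 : r₂ 0 = 1)
    (hKcompact : IsCompact (revBody n r₁)) (hKconv : Convex ℝ (revBody n r₁))
    (hKint : (interior (revBody n r₁)).Nonempty)
    (hKsymm : ∀ x ∈ revBody n r₁, -x ∈ revBody n r₁)
    (hpolar : polarBody (revBody n r₁) = revBody n r₂) :
    ((∫ t in Icc (-1 : ℝ) 1, r₁ t ^ (n + 1)) * (∫ s in Icc (-1 : ℝ) 1, r₂ s ^ (n + 1)) /
        ((∫ t in Icc (-1 : ℝ) 1, r₁ t ^ (n - 1)) *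
          (∫ s in Icc (-1 : ℝ) 1, r₂ s ^ (n - 1)))) *
        (((n : ℝ) - 1) / ((n : ℝ) + 1) ^ 2) ≤
      ((n : ℝ) - 1) / ((n : ℝ) + 1) ^ 2 := by
  have hn2 : (2 : ℝ) ≤ (n : ℝ) := by exact_mod_cast hn
  have hφ : (0 : ℝ) ≤ ((n : ℝ) - 1) / ((n : ℝ) + 1) ^ 2 := by
    apply div_nonneg (by linarith) (by positivity)
  set j : Fin n := ⟨1, by omega⟩ with hjdef
  have hj0 : j ≠ 0 := by
    simp [hjdef, Fin.ext_iff]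
  have h0j : (0 : Fin n) ≠ j := Ne.symm hj0
  have h0mem : (0 : ℝ) ∈ Icc (-1 : ℝ) 1 := by norm_num
  -- r₂ ≥ 0 on [-1,1]
  have hr2nonneg : ∀ s ∈ Icc (-1 : ℝ) 1, 0 ≤ r₂ s := by
    intro s hs
    have hx : EuclideanSpace.single (0 : Fin n) s ∈ polarBody (revBody n r₁) := by
      intro y hy
      have hin : ⟪EuclideanSpace.single (0 : Fin n) s, y⟫ = s * y 0 := by
        simp [EuclideanSpace.inner_single_left]
      rw [hin]
      obtain ⟨hy0, -⟩ := hy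
      calc s * y 0 ≤ |s * y 0| := le_abs_self _
        _ = |s| * |y 0| := abs_mul _ _
        _ ≤ 1 * 1 := by
            apply mul_le_mul (abs_le.2 ⟨hs.1, hs.2⟩) (abs_le.2 ⟨hy0.1, hy0.2⟩)
              (abs_nonneg _) zero_le_one
        _ = 1 := one_mul 1
    rw [hpolar] at hx
    have h2 := hx.2
    rw [tailNorm_single_zero] at h2
    simpa using h2
  -- r₂ ≤ 1 on [-1,1]
  have hr2le1 : ∀ s ∈ Icc (-1 : ℝ) 1, r₂ s ≤ 1 := by
    intro s hs
    have hy : EuclideanSpace.single j (1 : ℝ) ∈ revBody n r₁ := by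
      constructor
      · simpa [EuclideanSpace.single_apply, h0j] using h0mem
      · rw [tailNorm_single hj0]
        simp [EuclideanSpace.single_apply, h0j, hr₁0]
    have hx : (EuclideanSpace.single (0 : Fin n) s + EuclideanSpace.single j (r₂ s))
        ∈ revBody n r₂ := by
      constructor
      · simpa [EuclideanSpace.single_apply, h0j] using hs
      · rw [tailNorm_add_single hj0]
        simp only [EuclideanSpace.single_apply]
        rw [abs_of_nonneg (hr2nonneg s hs)]
        simp [h0j]
    rw [← hpolar] at hx
    have h := hx _ hy
    rw [inner_add_left] at h
    simpa [EuclideanSpace.inner_single_left, EuclideanSpace.single_apply, h0j, hj0] using h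
  -- r₁ ≤ 1 on [-1,1]
  have hr1le1 : ∀ t ∈ Icc (-1 : ℝ) 1, r₁ t ≤ 1 := by
    intro t ht
    by_cases h : 0 ≤ r₁ t
    · have hy : (EuclideanSpace.single (0 : Fin n) t + EuclideanSpace.single j (r₁ t))
          ∈ revBody n r₁ := by
        constructor
        · simpa [EuclideanSpace.single_apply, h0j] using ht
        · rw [tailNorm_add_single hj0]
          simp only [EuclideanSpace.single_apply]
          rw [abs_of_nonneg h]
          simp [h0j]
      have hx : EuclideanSpace.single j (1 : ℝ) ∈ revBody n r₂ := by
        constructor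
        · simpa [EuclideanSpace.single_apply, h0j] using h0mem
        · rw [tailNorm_single hj0]
          simp [EuclideanSpace.single_apply, h0j, hr₂0]
      rw [← hpolar] at hx
      have hle := hx _ hy
      rw [EuclideanSpace.inner_single_left] at hle
      simpa [EuclideanSpace.single_apply, h0j, hj0] using hle
    · linarith
  -- symmetry: 0 ≤ r₁ t → 0 ≤ r₁ (-t)
  have hsymm0 : ∀ t ∈ Icc (-1 : ℝ) 1, 0 ≤ r₁ t → 0 ≤ r₁ (-t) := by
    intro t ht h
    have hy : EuclideanSpace.single (0 : Fin n) t ∈ revBody n r₁ := by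
      constructor
      · simpa using ht
      · rw [tailNorm_single_zero]
        simpa using h
    have h2 := (hKsymm _ hy).2
    have hev : (-(EuclideanSpace.single (0 : Fin n) t)) 0 = -t := by
      simp
    rw [tailNorm_neg, tailNorm_single_zero, hev] at h2
    exact h2
  -- r₁ ≥ 0 on (-1,1)
  have hr1nonneg : ∀ t ∈ Ioo (-1 : ℝ) 1, 0 ≤ r₁ t := by
    intro t ht
    by_contra hneg0
    push_neg at hneg0
    obtain ⟨t', ht', ht'pos, hneg⟩ : ∃ t', t' ∈ Ioo (-1 : ℝ) 1 ∧ 0 < t' ∧ r₁ t' < 0 := by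
      rcases lt_trichotomy t 0 with h0 | h0 | h0
      · refine ⟨-t, ⟨by linarith [ht.2], by linarith [ht.1]⟩, by linarith, ?_⟩
        by_contra h2
        push_neg at h2
        have h3 := hsymm0 (-t) ⟨by linarith [ht.2], by linarith [ht.1]⟩ h2
        rw [neg_neg] at h3
        linarith
      · rw [h0, hr₁0] at hneg0; linarith
      · exact ⟨t, ht, h0, hneg0⟩
    have hK0 : ∀ y ∈ revBody n r₁, y 0 < t' := by
      intro y hy
      by_contra hge
      push_neg at hge
      have hy0pos : 0 < y 0 := lt_of_lt_of_le ht'pos hge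
      have hr1y : 0 ≤ r₁ (y 0) := le_trans (tailNorm_nonneg y) hy.2
      have hb0 : 0 ≤ t' / y 0 := div_nonneg ht'pos.le hy0pos.le
      have hb1 : t' / y 0 ≤ 1 := (div_le_one hy0pos).2 hge
      have key := hr₁.2 h0mem hy.1 (by linarith : (0:ℝ) ≤ 1 - t' / y 0) hb0 (by ring)
      have heq : (1 - t' / y 0) • (0 : ℝ) + (t' / y 0) • y 0 = t' := by
        rw [smul_eq_mul, smul_eq_mul, mul_zero, zero_add, div_mul_cancel₀ _ hy0pos.ne']
      rw [heq] at key
      have : (1 - t' / y 0) • r₁ 0 + (t' / y 0) • r₁ (y 0) ≥ 0 := by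
        rw [hr₁0, smul_eq_mul, smul_eq_mul, mul_one]
        have := mul_nonneg hb0 hr1y
        linarith
      linarith
    have hK0' : ∀ y ∈ revBody n r₁, -t' < y 0 := by
      intro y hy
      have h2 := hK0 _ (hKsymm _ hy)
      have : (-y) 0 = -(y 0) := by simp
      rw [this] at h2
      linarith
    have hx : EuclideanSpace.single (0 : Fin n) (1 / t') ∈ polarBody (revBody n r₁) := by
      intro y hy
      have hin : ⟪EuclideanSpace.single (0 : Fin n) (1 / t'), y⟫ = (1 / t') * y 0 := by
        simp [EuclideanSpace.inner_single_left]
      rw [hin]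
      calc (1 / t') * y 0 ≤ (1 / t') * t' :=
            mul_le_mul_of_nonneg_left (hK0 _ hy).le (by positivity)
        _ = 1 := by field_simp
    rw [hpolar] at hx
    have h1 := hx.1
    have hev : (EuclideanSpace.single (0 : Fin n) (1 / t')) 0 = 1 / t' := by simp
    rw [hev] at h1
    have : (1 : ℝ) / t' ≤ 1 := h1.2
    rw [div_le_one ht'pos] at this
    linarith [ht'.2]
  -- continuity on the open interval
  have hc1 : ContinuousOn r₁ (Ioo (-1 : ℝ) 1) :=
    (hr₁.subset Ioo_subset_Icc_self (convex_Ioo _ _)).continuousOn isOpen_Ioo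
  have hc2 : ContinuousOn r₂ (Ioo (-1 : ℝ) 1) :=
    (hr₂.subset Ioo_subset_Icc_self (convex_Ioo _ _)).continuousOn isOpen_Ioo
  have hr2nonneg' : ∀ s ∈ Ioo (-1 : ℝ) 1, 0 ≤ r₂ s :=
    fun s hs => hr2nonneg s (Ioo_subset_Icc_self hs)
  have hr2le1' : ∀ s ∈ Ioo (-1 : ℝ) 1, r₂ s ≤ 1 :=
    fun s hs => hr2le1 s (Ioo_subset_Icc_self hs)
  have hr1le1' : ∀ t ∈ Ioo (-1 : ℝ) 1, r₁ t ≤ 1 :=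
    fun t ht => hr1le1 t (Ioo_subset_Icc_self ht)
  have hnm : n - 1 ≤ n + 1 := by omega
  -- integral bounds
  have key : ∀ (r : ℝ → ℝ), ContinuousOn r (Ioo (-1 : ℝ) 1) →
      (∀ t ∈ Ioo (-1 : ℝ) 1, 0 ≤ r t) → (∀ t ∈ Ioo (-1 : ℝ) 1, r t ≤ 1) →
      (0 ≤ ∫ t in Ioo (-1 : ℝ) 1, r t ^ (n + 1)) ∧
      ((∫ t in Ioo (-1 : ℝ) 1, r t ^ (n + 1)) ≤ ∫ t in Ioo (-1 : ℝ) 1, r t ^ (n - 1)) ∧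
      (0 ≤ ∫ t in Ioo (-1 : ℝ) 1, r t ^ (n - 1)) := by
    intro r hc h0 h1
    refine ⟨?_, ?_, ?_⟩
    · exact setIntegral_nonneg measurableSet_Ioo fun t ht => pow_nonneg (h0 t ht) _
    · refine setIntegral_mono_on (integrableOn_pow_of_bounds hc h0 h1 _)
        (integrableOn_pow_of_bounds hc h0 h1 _) measurableSet_Ioo fun t ht => ?_
      exact pow_le_pow_of_le_one (h0 t ht) (h1 t ht) hnm
    · exact setIntegral_nonneg measurableSet_Ioo fun t ht => pow_nonneg (h0 t ht) _
  obtain ⟨hA0, hAC, hC0⟩ := key r₁ hc1 hr1nonneg hr1le1'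
  obtain ⟨hB0, hBD, hD0⟩ := key r₂ hc2 hr2nonneg' hr2le1'
  rw [integral_Icc_eq_integral_Ioo, integral_Icc_eq_integral_Ioo,
    integral_Icc_eq_integral_Ioo, integral_Icc_eq_integral_Ioo]
  set A := ∫ t in Ioo (-1 : ℝ) 1, r₁ t ^ (n + 1)
  set B := ∫ s in Ioo (-1 : ℝ) 1, r₂ s ^ (n + 1)
  set C := ∫ t in Ioo (-1 : ℝ) 1, r₁ t ^ (n - 1)
  set D := ∫ s in Ioo (-1 : ℝ) 1, r₂ s ^ (n - 1)
  rcases eq_or_lt_of_le (mul_nonneg hC0 hD0) with h | h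
  · rw [← h, div_zero, zero_mul]
    exact hφ
  · have hdiv : A * B / (C * D) ≤ 1 :=
      (div_le_one h).2 (mul_le_mul hAC hBD hB0 hC0)
    exact mul_le_of_le_one_left hφ hdiv
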